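/- For fixed probability densities p and q on ℝ (with q > 0 wherever needed), the function D ↦ ∫ (a·p(x)·log D(x) + b·q(x)·log(1 - D(x))) dx, over measurable functions D : ℝ → (0,1), is pointwise maximized by D*(x) = a·p(x) / (a·p(x) + b·q(x)), for positive constants a, b. -/

import Mathlib

open MeasureTheory Real

lemma key_ineq (A B D : ℝ) (hA : 0 ≤ A) (hB : 0 ≤ B) (hAB : 0 < A + B)
    (hD : D ∈ Set.Ioo (0 : ℝ) 1) :
    A * Real.log D + B * Real.log (1 - D)
      ≤ A * Real.log (A / (A + B)) + B * Real.log (1 - A / (A + B)) := by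
  obtain ⟨hD0, hD1⟩ := hD
  have h1D : 0 < 1 - D := by linarith
  rcases eq_or_lt_of_le hA with hA0 | hApos
  · -- A = 0
    have : A = 0 := hA0.symm
    subst this
    simp only [zero_mul, zero_add, zero_div, sub_zero, Real.log_one, mul_zero]
    norm_num
    have : Real.log (1 - D) ≤ 0 := Real.log_nonpos (by linarith) (by linarith)
    nlinarith
  rcases eq_or_lt_of_le hB with hB0 | hBpos
  · have : B = 0 := hB0.symm
    subst this
    simp only [zero_mul, add_zero, mul_zero, zero_add]
    rw [div_self (by linarith : A ≠ 0), Real.log_one, mul_zero]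
    have : Real.log D ≤ 0 := Real.log_nonpos (le_of_lt hD0) (le_of_lt hD1)
    nlinarith
  -- main case A, B > 0
  have hDs : A / (A + B) = A / (A + B) := rfl
  have h1Ds : 1 - A / (A + B) = B / (A + B) := by field_simp; ring
  rw [h1Ds]
  have hDspos : 0 < A / (A + B) := div_pos hApos hAB
  have hBspos : 0 < B / (A + B) := div_pos hBpos hAB
  have h1 : Real.log D - Real.log (A / (A + B)) = Real.log (D / (A / (A + B))) :=
    (Real.log_div (ne_of_gt hD0) (ne_of_gt hDspos)).symm
  have h2 : Real.log (1 - D) - Real.log (B / (A + B)) = Real.log ((1 - D) / (B / (A + B))) :=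
    (Real.log_div (ne_of_gt h1D) (ne_of_gt hBspos)).symm
  have l1 : Real.log (D / (A / (A + B))) ≤ D / (A / (A + B)) - 1 :=
    Real.log_le_sub_one_of_pos (div_pos hD0 hDspos)
  have l2 : Real.log ((1 - D) / (B / (A + B))) ≤ (1 - D) / (B / (A + B)) - 1 :=
    Real.log_le_sub_one_of_pos (div_pos h1D hBspos)
  have e1 : D / (A / (A + B)) = D * (A + B) / A := by field_simp
  have e2 : (1 - D) / (B / (A + B)) = (1 - D) * (A + B) / B := by field_simp
  have key : A * (Real.log D - Real.log (A / (A + B)))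
      + B * (Real.log (1 - D) - Real.log (B / (A + B))) ≤ 0 := by
    rw [h1, h2]
    have t1 : A * Real.log (D / (A / (A + B))) ≤ A * (D * (A + B) / A - 1) := by
      rw [← e1]; exact mul_le_mul_of_nonneg_left l1 hA
    have t2 : B * Real.log ((1 - D) / (B / (A + B))) ≤ B * ((1 - D) * (A + B) / B - 1) := by
      rw [← e2]; exact mul_le_mul_of_nonneg_left l2 hB
    have s1 : A * (D * (A + B) / A - 1) = D * (A + B) - A := by
      field_simp
    have s2 : B * ((1 - D) * (A + B) / B - 1) = (1 - D) * (A + B) - B := by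
      field_simp
    nlinarith
  nlinarith

/-- Optimal-discriminator lemma (pointwise form): for positive weights `a, b` and
nonnegative densities `p, q` on ℝ with `a·p x + b·q x > 0`, the integrand
`a·p x·log (D x) + b·q x·log (1 - D x)` is pointwise maximized, over measurable
`D : ℝ → (0,1)`, by `D* x = a·p x / (a·p x + b·q x)`; hence the integral functional
is maximized by `D*` as well. -/
theorem optimal_discriminator_pointwise
    (a b : ℝ) (ha : 0 < a) (hb : 0 < b)
    (p q : ℝ → ℝ) (hp : ∀ x, 0 ≤ p x) (hq : ∀ x, 0 ≤ q x)
    (hpq : ∀ x, 0 < a * p x + b * q x)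
    (hpmeas : Measurable p) (hqmeas : Measurable q)
    (hpint : Integrable p) (hqint : Integrable q)
    (hpprob : ∫ x, p x = 1) (hqprob : ∫ x, q x = 1)
    (Dstar : ℝ → ℝ) (hDstar : ∀ x, Dstar x = a * p x / (a * p x + b * q x)) :
    ∀ D : ℝ → ℝ, Measurable D → (∀ x, D x ∈ Set.Ioo (0 : ℝ) 1) →
      (∀ x, a * p x * Real.log (D x) + b * q x * Real.log (1 - D x)
          ≤ a * p x * Real.log (Dstar x) + b * q x * Real.log (1 - Dstar x))
      ∧ (Integrable (fun x => a * p x * Real.log (D x) + b * q x * Real.log (1 - D x)) →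
         Integrable (fun x => a * p x * Real.log (Dstar x) + b * q x * Real.log (1 - Dstar x)) →
         ∫ x, (a * p x * Real.log (D x) + b * q x * Real.log (1 - D x))
           ≤ ∫ x, (a * p x * Real.log (Dstar x) + b * q x * Real.log (1 - Dstar x))) := by
  intro D hDmeas hDmem
  have hpt : ∀ x, a * p x * Real.log (D x) + b * q x * Real.log (1 - D x)
      ≤ a * p x * Real.log (Dstar x) + b * q x * Real.log (1 - Dstar x) := by
    intro x
    rw [hDstar x]
    exact key_ineq (a * p x) (b * q x) (D x)
      (mul_nonneg ha.le (hp x)) (mul_nonneg hb.le (hq x)) (hpq x) (hDmem x)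
  exact ⟨hpt, fun h1 h2 => integral_mono h1 h2 hpt⟩
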